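/- Let n ≥ 2 be an integer and z₀ > 0. Suppose ψ : [0, z₀] → ℝ is continuous, twice continuously differentiable on (0, z₀], satisfies ψ″(z) + ψ′(z)/z = sin(ψ(z)) for all z ∈ (0, z₀], has ψ(0) = π/n and lim_{z→0⁺} ψ′(z) = 0, takes values in (0, π] on [0, z₀], and satisfies ψ(z₀) = π. Then z₀ ≥ ln(cot(π/(4n))). -/

import Mathlib

open Real

set_option maxHeartbeats 1000000

/-- Lower bound on the location of the singularity of the `n`-fold Amsler surface: if `ψ`
solves `ψ″ + ψ′/z = sin ψ` on `(0, z₀]` with `ψ(0) = π/n`, `ψ′(0⁺) = 0`, takes values in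
`(0,π]` on `[0,z₀]`, and `ψ(z₀) = π`, then `z₀ ≥ ln(cot(π/(4n)))`. -/
theorem amsler_singularity_lower_bound (n : ℕ) (hn : 2 ≤ n) (z₀ : ℝ) (hz₀ : 0 < z₀)
    (ψ : ℝ → ℝ)
    (hcont : ContinuousOn ψ (Set.Icc 0 z₀))
    (hC2 : ContDiffOn ℝ 2 ψ (Set.Ioc 0 z₀))
    (hode : ∀ z ∈ Set.Ioc (0:ℝ) z₀, deriv (deriv ψ) z + deriv ψ z / z = Real.sin (ψ z))
    (hinit : ψ 0 = π / n)
    (hinit' : Filter.Tendsto (deriv ψ) (nhdsWithin 0 (Set.Ioi 0)) (nhds 0))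
    (hrange : ∀ z ∈ Set.Icc (0:ℝ) z₀, ψ z ∈ Set.Ioc 0 π)
    (hsing : ψ z₀ = π) :
    Real.log (Real.cot (π / (4 * n))) ≤ z₀ := by
  have hnR : (2:ℝ) ≤ (n:ℝ) := by exact_mod_cast hn
  have hπ := Real.pi_pos
  -- Basic differentiability facts on the open interval.
  have hIoo : Set.Ioo (0:ℝ) z₀ ⊆ Set.Ioc 0 z₀ := Set.Ioo_subset_Ioc_self
  have hC2' : ContDiffOn ℝ 2 ψ (Set.Ioo 0 z₀) := hC2.mono hIoo
  have hψd : ∀ z ∈ Set.Ioo (0:ℝ) z₀, HasDerivAt ψ (deriv ψ z) z := by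
    intro z hz
    exact ((hC2'.differentiableOn (by norm_num)).differentiableAt
      (isOpen_Ioo.mem_nhds hz)).hasDerivAt
  have hdC1 : ContDiffOn ℝ 1 (deriv ψ) (Set.Ioo 0 z₀) :=
    hC2'.deriv_of_isOpen isOpen_Ioo (by norm_num)
  have hψdd : ∀ z ∈ Set.Ioo (0:ℝ) z₀, HasDerivAt (deriv ψ) (deriv (deriv ψ) z) z := fun z hz =>
    ((hdC1.differentiableOn (by norm_num)).differentiableAt (isOpen_Ioo.mem_nhds hz)).hasDerivAt
  -- The energy and its derivative.
  have hEd : ∀ z ∈ Set.Ioo (0:ℝ) z₀,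
      HasDerivAt (fun z => (deriv ψ z)^2/2 + Real.cos (ψ z)) (-(deriv ψ z)^2 / z) z := by
    intro z hz
    have h1 := hψd z hz
    have h2 := hψdd z hz
    have hcos : HasDerivAt (fun z => Real.cos (ψ z)) (-Real.sin (ψ z) * deriv ψ z) z :=
      (Real.hasDerivAt_cos (ψ z)).comp z h1
    have hsq : HasDerivAt (fun z => (deriv ψ z)^2/2)
        ((2 * deriv ψ z ^ 1 * deriv (deriv ψ) z) / 2) z := (h2.pow 2).div_const 2
    have hsum := hsq.add hcos
    have hodez := hode z (hIoo hz)
    have hzne : z ≠ 0 := ne_of_gt hz.1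
    have hψ'' : deriv (deriv ψ) z = Real.sin (ψ z) - deriv ψ z / z := by linarith
    refine hsum.congr_deriv ?_
    symm
    rw [hψ'']
    field_simp
    ring
  -- Energy bound via monotonicity and the limit at 0.
  have hEbound : ∀ z ∈ Set.Ioo (0:ℝ) z₀,
      (deriv ψ z)^2/2 + Real.cos (ψ z) ≤ Real.cos (π / n) := by
    intro z hz
    have key : ∀ ε ∈ Set.Ioo (0:ℝ) z,
        (deriv ψ z)^2/2 + Real.cos (ψ z) ≤ (deriv ψ ε)^2/2 + Real.cos (ψ ε) := by
      intro ε hε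
      have hsub : Set.Icc ε z ⊆ Set.Ioo 0 z₀ := fun t ht =>
        ⟨lt_of_lt_of_le hε.1 ht.1, lt_of_le_of_lt ht.2 hz.2⟩
      have hsub' : interior (Set.Icc ε z) ⊆ Set.Ioo 0 z₀ := by
        rw [interior_Icc]; exact fun t ht => hsub (Set.Ioo_subset_Icc_self ht)
      have hanti : AntitoneOn (fun z => (deriv ψ z)^2/2 + Real.cos (ψ z)) (Set.Icc ε z) := by
        refine antitoneOn_of_deriv_nonpos (convex_Icc _ _)
          (fun t ht => (hEd t (hsub ht)).continuousAt.continuousWithinAt)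
          (fun t ht => ((hEd t (hsub' ht)).differentiableAt).differentiableWithinAt)
          (fun t ht => ?_)
        rw [(hEd t (hsub' ht)).deriv]
        have ht0 : 0 < t := (hsub' ht).1
        apply div_nonpos_of_nonpos_of_nonneg _ ht0.le
        nlinarith [sq_nonneg (deriv ψ t)]
      exact hanti ⟨le_refl ε, hε.2.le⟩ ⟨hε.2.le, le_refl z⟩ hε.2.le
    haveI : (nhdsWithin (0:ℝ) (Set.Ioo 0 z)).NeBot := left_nhdsWithin_Ioo_neBot hz.1
    have hψ0 : Filter.Tendsto ψ (nhdsWithin 0 (Set.Ioo 0 z)) (nhds (π/n)) := by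
      have h0 : (0:ℝ) ∈ Set.Icc (0:ℝ) z₀ := ⟨le_refl 0, hz₀.le⟩
      have := (hcont 0 h0).mono_left
        (nhdsWithin_mono 0 (fun t (ht : t ∈ Set.Ioo (0:ℝ) z) => ⟨ht.1.le, ht.2.le.trans hz.2.le⟩))
      rwa [hinit] at this
    have hd0 : Filter.Tendsto (deriv ψ) (nhdsWithin 0 (Set.Ioo 0 z)) (nhds 0) :=
      hinit'.mono_left (nhdsWithin_mono 0 (fun t (ht : t ∈ Set.Ioo (0:ℝ) z) => ht.1))
    have hEt : Filter.Tendsto (fun ε => (deriv ψ ε)^2/2 + Real.cos (ψ ε))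
        (nhdsWithin 0 (Set.Ioo 0 z)) (nhds ((0:ℝ)^2/2 + Real.cos (π/n))) :=
      ((hd0.pow 2).div_const 2).add
        ((Real.continuous_cos.continuousAt.tendsto).comp hψ0)
    have hEt' : Filter.Tendsto (fun ε => (deriv ψ ε)^2/2 + Real.cos (ψ ε))
        (nhdsWithin 0 (Set.Ioo 0 z)) (nhds (Real.cos (π/n))) := by
      convert hEt using 2; norm_num
    refine ge_of_tendsto hEt' ?_
    filter_upwards [eventually_mem_nhdsWithin] with ε hε using key ε hε
  -- Pointwise bound |ψ'| ≤ 2 sin(ψ/2), in the form ψ' ≤ 2 sin(ψ/2).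
  have hsinhalf : ∀ z ∈ Set.Icc (0:ℝ) z₀, 0 < Real.sin (ψ z / 2) := by
    intro z hz
    have hψr := hrange z hz
    exact Real.sin_pos_of_pos_of_lt_pi (by linarith [hψr.1]) (by linarith [hψr.2])
  have hkey : ∀ z ∈ Set.Ioo (0:ℝ) z₀, deriv ψ z ≤ 2 * Real.sin (ψ z / 2) := by
    intro z hz
    have hE := hEbound z hz
    have hs := hsinhalf z ⟨hz.1.le, hz.2.le⟩
    have hid : 1 - Real.cos (ψ z) = 2 * Real.sin (ψ z / 2)^2 := by
      have h1 : Real.cos (ψ z) = 2 * Real.cos (ψ z / 2)^2 - 1 := by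
        rw [← Real.cos_two_mul]; congr 1; ring
      have h2 := Real.sin_sq_add_cos_sq (ψ z / 2)
      linarith
    have hc1 : Real.cos (π / n) ≤ 1 := Real.cos_le_one _
    nlinarith [sq_nonneg (deriv ψ z - 2 * Real.sin (ψ z / 2)), sq_nonneg (deriv ψ z)]
  -- Facts about ψ z / 4.
  have hquarter : ∀ z ∈ Set.Icc (0:ℝ) z₀,
      0 < Real.sin (ψ z / 4) ∧ 0 < Real.cos (ψ z / 4) ∧ 0 < Real.tan (ψ z / 4) := by
    intro z hz
    have hψr := hrange z hz
    have hs : 0 < Real.sin (ψ z / 4) :=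
      Real.sin_pos_of_pos_of_lt_pi (by linarith [hψr.1]) (by linarith [hψr.2])
    have hc : 0 < Real.cos (ψ z / 4) :=
      Real.cos_pos_of_mem_Ioo ⟨by linarith [hψr.1], by linarith [hψr.2]⟩
    refine ⟨hs, hc, ?_⟩
    rw [Real.tan_eq_sin_div_cos]; positivity
  -- The comparison function g(z) = log(tan(ψ z / 4)) - z.
  have hgcont : ContinuousOn (fun z => Real.log (Real.tan (ψ z / 4)) - z) (Set.Icc 0 z₀) := by
    intro z hz
    obtain ⟨hs, hc, ht⟩ := hquarter z hz
    have h1 : ContinuousWithinAt (fun z => ψ z / 4) (Set.Icc 0 z₀) z := (hcont z hz).div_const 4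
    have h2 : ContinuousAt Real.tan (ψ z / 4) := Real.continuousAt_tan.mpr (ne_of_gt hc)
    have h3 : ContinuousAt Real.log (Real.tan (ψ z / 4)) := Real.continuousAt_log (ne_of_gt ht)
    have h12 : ContinuousWithinAt (fun z => Real.tan (ψ z / 4)) (Set.Icc 0 z₀) z :=
      ContinuousAt.comp_continuousWithinAt (g := Real.tan) (f := fun z => ψ z / 4) h2 h1
    have h123 : ContinuousWithinAt (fun z => Real.log (Real.tan (ψ z / 4))) (Set.Icc 0 z₀) z :=
      ContinuousAt.comp_continuousWithinAt (g := Real.log)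
        (f := fun z => Real.tan (ψ z / 4)) h3 h12
    exact h123.sub continuousWithinAt_id
  have hgd : ∀ z ∈ Set.Ioo (0:ℝ) z₀,
      HasDerivAt (fun z => Real.log (Real.tan (ψ z / 4)) - z)
        (deriv ψ z / (2 * Real.sin (ψ z / 2)) - 1) z := by
    intro z hz
    obtain ⟨hs, hc, ht⟩ := hquarter z ⟨hz.1.le, hz.2.le⟩
    have h1 : HasDerivAt (fun z => ψ z / 4) (deriv ψ z / 4) z := (hψd z hz).div_const 4
    have h2 : HasDerivAt Real.tan (1 / Real.cos (ψ z / 4) ^ 2) (ψ z / 4) :=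
      Real.hasDerivAt_tan (ne_of_gt hc)
    have h3 : HasDerivAt Real.log (Real.tan (ψ z / 4))⁻¹ (Real.tan (ψ z / 4)) :=
      Real.hasDerivAt_log (ne_of_gt ht)
    have hcomp := ((h3.comp z (h2.comp z h1))).sub (hasDerivAt_id z)
    refine hcomp.congr_deriv ?_
    symm
    have hsin2 : Real.sin (ψ z / 2) = 2 * Real.sin (ψ z / 4) * Real.cos (ψ z / 4) := by
      rw [show ψ z / 2 = 2 * (ψ z / 4) by ring, Real.sin_two_mul]
    rw [Real.tan_eq_sin_div_cos, hsin2]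
    field_simp
    ring
  have hganti : AntitoneOn (fun z => Real.log (Real.tan (ψ z / 4)) - z) (Set.Icc 0 z₀) := by
    refine antitoneOn_of_deriv_nonpos (convex_Icc _ _) hgcont
      (fun z hz => ?_) (fun z hz => ?_)
    · rw [interior_Icc] at hz
      exact ((hgd z hz).differentiableAt).differentiableWithinAt
    · rw [interior_Icc] at hz
      rw [(hgd z hz).deriv]
      have hk := hkey z hz
      have hs := hsinhalf z ⟨hz.1.le, hz.2.le⟩
      have hdiv : deriv ψ z / (2 * Real.sin (ψ z / 2)) ≤ 1 := by
        rw [div_le_one (by positivity)]; linarith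
      linarith
  have hmain := hganti (Set.left_mem_Icc.mpr hz₀.le) (Set.right_mem_Icc.mpr hz₀.le) hz₀.le
  simp only [hsing, hinit, sub_zero] at hmain
  rw [show π / 4 = π / 4 from rfl] at hmain
  have htan1 : Real.tan (π / 4) = 1 := Real.tan_pi_div_four
  rw [htan1, Real.log_one] at hmain
  -- hmain : 0 - z₀ ≤ log (tan (π / n / 4))
  have hxeq : π / (n:ℝ) / 4 = π / (4 * n) := by ring
  rw [hxeq] at hmain
  -- Relate log cot and log tan.
  have hnpos : (0:ℝ) < (n:ℝ) := by linarith
  have hxpos : 0 < π / (4 * n) := by positivity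
  have hxlt : π / (4 * n) < π / 2 := by
    rw [div_lt_div_iff₀ (by positivity) (by norm_num)]
    nlinarith
  have hsx : 0 < Real.sin (π / (4 * n)) := Real.sin_pos_of_pos_of_lt_pi hxpos (by linarith)
  have hcx : 0 < Real.cos (π / (4 * n)) := Real.cos_pos_of_mem_Ioo ⟨by linarith, hxlt⟩
  have hlogeq : Real.log (Real.cot (π / (4 * n))) = - Real.log (Real.tan (π / (4 * n))) := by
    rw [Real.cot_eq_cos_div_sin, Real.tan_eq_sin_div_cos,
      Real.log_div (ne_of_gt hcx) (ne_of_gt hsx), Real.log_div (ne_of_gt hsx) (ne_of_gt hcx)]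
    ring
  rw [hlogeq]
  linarith
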